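/- One has 𝒢(2,2) = −(117√3)/(40π). -/

import Mathlib

open intervalIntegral Real Complex

/-- `u(t) = (−1 + i√(4t−1))/(2t)`. -/
noncomputable def uu (t : ℝ) : ℂ :=
  (-1 + Complex.I * (Real.sqrt (4 * t - 1) : ℝ)) / (2 * t)

/-- The renormalized Green's function of the triangular-lattice walk:
`𝒢(x,y) = (3/π) ∫_{1/4}^{1} (4t−1)^{−1/2} ( t^y Σ_{j=1}^{x} C(x,j)(1−t)^{j−1} Re(u(t)^j)
  − Σ_{ℓ=0}^{y−1} t^ℓ ) dt`. -/
noncomputable def calG (x y : ℕ) : ℝ :=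
  (3 / Real.pi) * ∫ t in (1/4 : ℝ)..1,
    (1 / Real.sqrt (4 * t - 1)) *
      (t ^ y * ∑ j ∈ Finset.Icc 1 x, (x.choose j : ℝ) * (1 - t) ^ (j - 1) * ((uu t) ^ j).re
        - ∑ l ∈ Finset.range y, t ^ l)

lemma uu_re (t : ℝ) (ht : t ≠ 0) : (uu t).re = -1/(2*t) := by
  simp only [uu]
  rw [Complex.div_re]
  simp [Complex.normSq]
  field_simp

lemma uu_sq_re (t : ℝ) (ht : t ≠ 0) (h4 : 4*t - 1 ≥ 0) :
    ((uu t)^2).re = (1 - 2*t)/(2*t^2) := by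
  have hs : Real.sqrt (4*t-1) ^ 2 = 4*t - 1 := Real.sq_sqrt h4
  simp only [uu, pow_two]
  rw [div_mul_div_comm, Complex.div_re]
  simp [Complex.normSq, Complex.mul_re, Complex.mul_im]
  field_simp
  nlinarith [hs]

lemma integrand_eq (t : ℝ) (h1 : (1/4 : ℝ) ≤ t) :
    (1 / Real.sqrt (4 * t - 1)) *
      (t ^ 2 * ∑ j ∈ Finset.Icc 1 2, ((Nat.choose 2 j : ℕ) : ℝ) * (1 - t) ^ (j - 1) * ((uu t) ^ j).re
        - ∑ l ∈ Finset.range 2, t ^ l)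
    = (2*t^2 - 7*t - 1) / (2 * Real.sqrt (4*t-1)) := by
  have ht : t ≠ 0 := by positivity
  have h4 : 4*t - 1 ≥ 0 := by linarith
  have hIcc : Finset.Icc 1 2 = ({1, 2} : Finset ℕ) := rfl
  rw [hIcc, Finset.sum_pair (by norm_num), Finset.sum_range_succ, Finset.sum_range_one]
  rw [pow_one, uu_re t ht, uu_sq_re t ht h4]
  rcases eq_or_ne (Real.sqrt (4*t-1)) 0 with hs | hs
  · rw [hs]; simp
  · have hs2 : Real.sqrt (4*t-1) ^ 2 = 4*t-1 := Real.sq_sqrt h4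
    field_simp
    simp only [Nat.choose_one_right, Nat.choose_self, Nat.cast_one, Nat.cast_ofNat]
    ring

noncomputable def FF (t : ℝ) : ℝ := Real.sqrt (4*t-1) * (4*t^2 - 22*t - 21) / 40

lemma ftc : ∫ t in (1/4 : ℝ)..1, (2*t^2 - 7*t - 1) / (2 * Real.sqrt (4*t-1))
    = -(39 * Real.sqrt 3) / 40 := by
  have hInt : IntervalIntegrable (fun t => (2*t^2 - 7*t - 1) / (2 * Real.sqrt (4*t-1)))
      MeasureTheory.volume (1/4 : ℝ) 1 := by
    have hg : IntervalIntegrable (fun t : ℝ => (5/2) * (t - 1/4) ^ (-(1/2) : ℝ))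
        MeasureTheory.volume (1/4 : ℝ) 1 := by
      apply IntervalIntegrable.const_mul
      have := (intervalIntegral.intervalIntegrable_rpow' (a := 0) (b := 3/4)
        (r := -(1/2)) (by norm_num)).comp_sub_right (1/4)
      norm_num at this ⊢
      exact this
    apply hg.mono_fun'
    · apply Measurable.aestronglyMeasurable
      fun_prop
    · rw [Filter.EventuallyLE, MeasureTheory.ae_restrict_iff' measurableSet_uIoc]
      apply Filter.Eventually.of_forall
      intro t ht
      rw [Set.uIoc_of_le (by norm_num)] at ht
      obtain ⟨ht1, ht2⟩ := ht
      have h4 : (0:ℝ) ≤ 4*t - 1 := by linarith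
      have hrw : Real.sqrt (4*t-1) = 2 * Real.sqrt (t - 1/4) := by
        rw [show 4*t-1 = 4*(t-1/4) by ring, show (4:ℝ) = 2^2 by norm_num,
          Real.sqrt_mul (by positivity), Real.sqrt_sq (by norm_num)]
      have hst : 0 < Real.sqrt (t - 1/4) := Real.sqrt_pos.mpr (by linarith)
      have hb : |2*t^2 - 7*t - 1| ≤ 10 := by
        rw [abs_le]; constructor <;> nlinarith
      rw [Real.norm_eq_abs, abs_div, hrw, Real.rpow_neg (by linarith), ← Real.sqrt_eq_rpow,
        abs_of_pos (by positivity : (0:ℝ) < 2*(2*Real.sqrt (t-1/4))), div_le_iff₀ (by positivity)]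
      have hone : (Real.sqrt (t-1/4))⁻¹ * Real.sqrt (t-1/4) = 1 := inv_mul_cancel₀ hst.ne'
      nlinarith [hone, hb]
  have hderiv : ∀ t ∈ Set.Ioo (1/4 : ℝ) 1,
      HasDerivAt FF ((2*t^2 - 7*t - 1) / (2 * Real.sqrt (4*t-1))) t := by
    intro t ht
    obtain ⟨ht1, ht2⟩ := ht
    have h4 : (0:ℝ) < 4*t - 1 := by linarith
    have hst : 0 < Real.sqrt (4*t-1) := Real.sqrt_pos.mpr h4
    have hs2 : Real.sqrt (4*t-1) ^ 2 = 4*t-1 := Real.sq_sqrt h4.le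
    have hd1 : HasDerivAt (fun t : ℝ => Real.sqrt (4*t-1)) (1 / (2 * Real.sqrt (4*t-1)) * 4) t := by
      have hinner : HasDerivAt (fun t : ℝ => 4*t-1) 4 t := by
        simpa using ((hasDerivAt_id t).const_mul 4).sub_const 1
      simpa [Function.comp_def] using (Real.hasDerivAt_sqrt h4.ne').comp t hinner
    have hd2 : HasDerivAt (fun t : ℝ => 4*t^2 - 22*t - 21) (8*t - 22) t := by
      have h := (((hasDerivAt_pow 2 t).const_mul 4).sub
        ((hasDerivAt_id' t).const_mul 22)).sub_const 21
      refine h.congr_deriv (Eq.symm ?_)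
      push_cast; ring
    have := ((hd1.mul hd2).div_const 40)
    refine this.congr_deriv (Eq.symm ?_)
    rw [div_eq_div_iff (by positivity) (by norm_num)]
    have hinv : (2 * Real.sqrt (4*t-1))⁻¹ * (2 * Real.sqrt (4*t-1)) = 1 := inv_mul_cancel₀ (by positivity)
    rw [one_div]
    linear_combination (44 - 16*t) * hs2 - 4*(4*t^2-22*t-21) * hinv
  have hcont : ContinuousOn FF (Set.Icc (1/4 : ℝ) 1) := by
    apply Continuous.continuousOn
    unfold FF
    fun_prop
  rw [intervalIntegral.integral_eq_sub_of_hasDerivAt_of_le (by norm_num) hcont hderiv hInt]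
  unfold FF
  norm_num
  ring

/-- `𝒢(2,2) = −(117√3)/(40π)`. -/
theorem calG_two_two : calG 2 2 = -(117 * Real.sqrt 3) / (40 * Real.pi) := by
  have hI : (∫ t in (1/4 : ℝ)..1, (1 / Real.sqrt (4 * t - 1)) *
      (t ^ 2 * ∑ j ∈ Finset.Icc 1 2, ((Nat.choose 2 j : ℕ) : ℝ) * (1 - t) ^ (j - 1) * ((uu t) ^ j).re
        - ∑ l ∈ Finset.range 2, t ^ l))
      = ∫ t in (1/4 : ℝ)..1, (2*t^2 - 7*t - 1) / (2 * Real.sqrt (4*t-1)) := by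
    apply intervalIntegral.integral_congr
    intro t ht
    rw [Set.uIcc_of_le (by norm_num)] at ht
    exact integrand_eq t ht.1
  rw [calG, hI, ftc]
  have hπ : Real.pi ≠ 0 := Real.pi_ne_zero
  field_simp
  ring
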